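/- There exists M > 0 such that for all T ∈ (0,1] and all r ∈ ℝ³ one has |(𝒪(T)⁻¹ r)_i| ≤ M T^{1−i} ‖r‖ for i = 1, 2, 3. Consequently: (a) for all c, s ≥ 0, if ‖r‖ ≤ c T³ s then ‖𝒪(T)⁻¹ r‖ ≤ M' c T s for a constant M' independent of T, c, s; and (b) for every d ∈ ℝ³, ‖𝒪(T)⁻¹ d‖ ≤ M' T^{−2} ‖d‖. -/

import Mathlib

open Matrix

/-- Discrete-time transition matrix of the triple integrator with sampling time T. -/
noncomputable def Amat (T : ℝ) : Matrix (Fin 3) (Fin 3) ℝ :=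
  !![1, T, T ^ 2 / 2; 0, 1, T; 0, 0, 1]

/-- Observability matrix of the pair (A(T)⁻¹, e₁ᵀ): row i is e₁ᵀ (A(T)⁻¹)^i. -/
noncomputable def Obs (T : ℝ) : Matrix (Fin 3) (Fin 3) ℝ :=
  Matrix.of fun i j => ((Amat T)⁻¹ ^ (i : ℕ)) 0 j

/-- Euclidean norm on ℝ³ (as `Fin 3 → ℝ`). -/
noncomputable def enorm3 (r : Fin 3 → ℝ) : ℝ := Real.sqrt (∑ i, (r i) ^ 2)

lemma Amat_inv (T : ℝ) : (Amat T)⁻¹ = !![1, -T, T ^ 2 / 2; 0, 1, -T; 0, 0, 1] := by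
  apply inv_eq_right_inv
  ext i j
  fin_cases i <;> fin_cases j <;>
    simp [Amat, Matrix.mul_apply, Fin.sum_univ_three, Matrix.vecHead, Matrix.vecTail] <;> ring

lemma Obs_eq (T : ℝ) : Obs T = !![1, 0, 0; 1, -T, T ^ 2 / 2; 1, -2 * T, 2 * T ^ 2] := by
  ext i j
  fin_cases i <;> fin_cases j <;>
    simp [Obs, Amat_inv, pow_succ, Matrix.mul_apply, Fin.sum_univ_three,
      Matrix.vecHead, Matrix.vecTail] <;> ring

lemma Obs_inv {T : ℝ} (hT : T ≠ 0) :
    (Obs T)⁻¹ = !![1, 0, 0; 3 / (2 * T), -2 / T, 1 / (2 * T);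
                   1 / T ^ 2, -2 / T ^ 2, 1 / T ^ 2] := by
  apply inv_eq_right_inv
  rw [Obs_eq]
  ext i j
  fin_cases i <;> fin_cases j <;>
    simp [Matrix.mul_apply, Fin.sum_univ_three, Matrix.vecHead, Matrix.vecTail] <;>
    field_simp <;> ring

lemma enorm3_nonneg (v : Fin 3 → ℝ) : 0 ≤ enorm3 v := Real.sqrt_nonneg _

lemma abs_le_enorm3 (v : Fin 3 → ℝ) (i : Fin 3) : |v i| ≤ enorm3 v := by
  rw [enorm3, ← Real.sqrt_sq_eq_abs]
  apply Real.sqrt_le_sqrt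
  fin_cases i <;> simp [Fin.sum_univ_three] <;>
    nlinarith [sq_nonneg (v 0), sq_nonneg (v 1), sq_nonneg (v 2)]

lemma enorm3_le_sum (v : Fin 3 → ℝ) : enorm3 v ≤ |v 0| + |v 1| + |v 2| := by
  have h0 : (0:ℝ) ≤ |v 0| + |v 1| + |v 2| := by positivity
  rw [enorm3]
  calc Real.sqrt (∑ i, (v i) ^ 2) ≤ Real.sqrt ((|v 0| + |v 1| + |v 2|) ^ 2) := by
        apply Real.sqrt_le_sqrt
        simp [Fin.sum_univ_three]
        nlinarith [abs_nonneg (v 0), abs_nonneg (v 1), abs_nonneg (v 2),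
          sq_abs (v 0), sq_abs (v 1), sq_abs (v 2)]
    _ = |v 0| + |v 1| + |v 2| := Real.sqrt_sq h0

lemma comp0 {T : ℝ} (hT : T ≠ 0) (r : Fin 3 → ℝ) :
    ((Obs T)⁻¹ *ᵥ r) 0 = r 0 := by
  simp [Obs_inv hT, Matrix.mulVec, dotProduct, Fin.sum_univ_three]

lemma comp1 {T : ℝ} (hT : T ≠ 0) (r : Fin 3 → ℝ) :
    ((Obs T)⁻¹ *ᵥ r) 1 = (3 * r 0 - 4 * r 1 + r 2) / (2 * T) := by
  simp [Obs_inv hT, Matrix.mulVec, dotProduct, Fin.sum_univ_three,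
    Matrix.vecHead, Matrix.vecTail]
  field_simp
  ring

lemma comp2 {T : ℝ} (hT : T ≠ 0) (r : Fin 3 → ℝ) :
    ((Obs T)⁻¹ *ᵥ r) 2 = (r 0 - 2 * r 1 + r 2) / T ^ 2 := by
  simp [Obs_inv hT, Matrix.mulVec, dotProduct, Fin.sum_univ_three,
    Matrix.vecHead, Matrix.vecTail]
  field_simp
  ring

lemma abs1 {T : ℝ} (hT : 0 < T) (r : Fin 3 → ℝ) :
    |((Obs T)⁻¹ *ᵥ r) 1| ≤ 4 / T * enorm3 r := by
  rw [comp1 hT.ne']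
  rw [abs_div, abs_of_pos (by linarith : (0:ℝ) < 2 * T)]
  have h : |3 * r 0 - 4 * r 1 + r 2| ≤ 8 * enorm3 r := by
    have := abs_le_enorm3 r 0
    have := abs_le_enorm3 r 1
    have := abs_le_enorm3 r 2
    have h1 : |3 * r 0 - 4 * r 1 + r 2| ≤ |3 * r 0| + |(-4) * r 1| + |r 2| := by
      calc |3 * r 0 - 4 * r 1 + r 2| ≤ |3 * r 0 - 4 * r 1| + |r 2| := abs_add_le _ _
        _ ≤ |3 * r 0| + |(-4) * r 1| + |r 2| := by
            have := abs_sub (3 * r 0) (4 * r 1)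
            simp only [neg_mul, abs_neg] at *
            linarith [abs_sub (3 * r 0) (4 * r 1)]
    rw [abs_mul, abs_mul] at h1
    norm_num at h1
    linarith
  have heq : 4 / T * enorm3 r = 8 * enorm3 r / (2 * T) := by field_simp; ring
  rw [heq]
  gcongr

lemma abs2 {T : ℝ} (hT : 0 < T) (r : Fin 3 → ℝ) :
    |((Obs T)⁻¹ *ᵥ r) 2| ≤ 4 / T ^ 2 * enorm3 r := by
  rw [comp2 hT.ne']
  rw [abs_div, abs_of_pos (by positivity : (0:ℝ) < T ^ 2)]
  have h : |r 0 - 2 * r 1 + r 2| ≤ 4 * enorm3 r := by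
    have := abs_le_enorm3 r 0
    have := abs_le_enorm3 r 1
    have := abs_le_enorm3 r 2
    have h1 : |r 0 - 2 * r 1 + r 2| ≤ |r 0| + |2 * r 1| + |r 2| := by
      calc |r 0 - 2 * r 1 + r 2| ≤ |r 0 - 2 * r 1| + |r 2| := abs_add_le _ _
        _ ≤ |r 0| + |2 * r 1| + |r 2| := by linarith [abs_sub (r 0) (2 * r 1)]
    rw [abs_mul] at h1
    norm_num at h1
    linarith
  have heq : 4 / T ^ 2 * enorm3 r = 4 * enorm3 r / T ^ 2 := by ring
  rw [heq]
  gcongr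

theorem observability_matrix_inverse_scaling :
    ∃ M M' : ℝ, 0 < M ∧ 0 < M' ∧
      (∀ T ∈ Set.Ioc (0 : ℝ) 1, ∀ r : Fin 3 → ℝ, ∀ i : Fin 3,
        |((Obs T)⁻¹ *ᵥ r) i| ≤ M * T ^ (1 - ((i : ℕ) + 1) : ℤ) * enorm3 r) ∧
      (∀ T ∈ Set.Ioc (0 : ℝ) 1, ∀ c s : ℝ, 0 ≤ c → 0 ≤ s →
        ∀ r : Fin 3 → ℝ, enorm3 r ≤ c * T ^ 3 * s →
          enorm3 ((Obs T)⁻¹ *ᵥ r) ≤ M' * c * T * s) ∧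
      (∀ T ∈ Set.Ioc (0 : ℝ) 1, ∀ d : Fin 3 → ℝ,
        enorm3 ((Obs T)⁻¹ *ᵥ d) ≤ M' * T ^ (-2 : ℤ) * enorm3 d) := by
  refine ⟨4, 12, by norm_num, by norm_num, ?_, ?_, ?_⟩
  · intro T hT r i
    obtain ⟨hT0, hT1⟩ := hT
    have hN := enorm3_nonneg r
    fin_cases i
    · have h := abs_le_enorm3 r 0
      have hc : ((Obs T)⁻¹ *ᵥ r) 0 = r 0 := comp0 hT0.ne' r
      have he : T ^ (1 - ((0:ℕ) + 1) : ℤ) = 1 := by norm_num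
      calc |((Obs T)⁻¹ *ᵥ r) 0| = |r 0| := by rw [hc]
        _ ≤ enorm3 r := h
        _ ≤ 4 * T ^ (1 - ((0:ℕ) + 1) : ℤ) * enorm3 r := by rw [he]; linarith
    · have he : T ^ (1 - ((1:ℕ) + 1) : ℤ) = 1 / T := by
        norm_num
      rw [he]
      have := abs1 hT0 r
      calc |((Obs T)⁻¹ *ᵥ r) 1| ≤ 4 / T * enorm3 r := this
        _ = 4 * (1 / T) * enorm3 r := by ring
    · have he : T ^ (1 - ((2:ℕ) + 1) : ℤ) = 1 / T ^ 2 := by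
        norm_num
      rw [he]
      have := abs2 hT0 r
      calc |((Obs T)⁻¹ *ᵥ r) 2| ≤ 4 / T ^ 2 * enorm3 r := this
        _ = 4 * (1 / T ^ 2) * enorm3 r := by ring
  · intro T hT c s hc hs r hr
    obtain ⟨hT0, hT1⟩ := hT
    have hN := enorm3_nonneg r
    set v := (Obs T)⁻¹ *ᵥ r with hv
    have h0 : |v 0| ≤ c * T * s := by
      rw [hv, comp0 hT0.ne' r]
      have := abs_le_enorm3 r 0
      have q : T ^ 2 ≤ 1 := by nlinarith
      nlinarith [mul_nonneg (mul_nonneg hc hs) hT0.le, q, this]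
    have h1 : |v 1| ≤ 4 * c * T * s := by
      have := abs1 hT0 r
      have e1 : 4 / T * enorm3 r ≤ 4 * c * T ^ 2 * s := by
        rw [div_mul_eq_mul_div, div_le_iff₀ hT0]
        nlinarith
      have e2 : 4 * c * T ^ 2 * s ≤ 4 * c * T * s := by
        nlinarith [mul_nonneg (mul_nonneg hc hs) hT0.le]
      linarith
    have h2 : |v 2| ≤ 4 * c * T * s := by
      have := abs2 hT0 r
      have e1 : 4 / T ^ 2 * enorm3 r ≤ 4 * c * T * s := by
        rw [div_mul_eq_mul_div, div_le_iff₀ (by positivity : (0:ℝ) < T ^ 2)]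
        nlinarith
      linarith
    have := enorm3_le_sum v
    calc enorm3 v ≤ |v 0| + |v 1| + |v 2| := this
      _ ≤ c * T * s + 4 * c * T * s + 4 * c * T * s := by linarith
      _ ≤ 12 * c * T * s := by nlinarith [mul_nonneg (mul_nonneg hc hT0.le) hs]
  · intro T hT d
    obtain ⟨hT0, hT1⟩ := hT
    have hN := enorm3_nonneg d
    set v := (Obs T)⁻¹ *ᵥ d with hv
    have hT2 : (0:ℝ) < T ^ 2 := by positivity
    have h0 : |v 0| ≤ enorm3 d / T ^ 2 := by
      rw [hv, comp0 hT0.ne' d]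
      rw [le_div_iff₀ hT2]
      have := abs_le_enorm3 d 0
      have q : T ^ 2 ≤ 1 := by nlinarith
      nlinarith [abs_nonneg (d 0), q, this]
    have h1 : |v 1| ≤ 4 * enorm3 d / T ^ 2 := by
      have := abs1 hT0 d
      have e : 4 / T * enorm3 d ≤ 4 * enorm3 d / T ^ 2 := by
        rw [div_mul_eq_mul_div, div_le_div_iff₀ hT0 hT2]
        nlinarith [mul_nonneg hN hT0.le]
      linarith
    have h2 : |v 2| ≤ 4 * enorm3 d / T ^ 2 := by
      have := abs2 hT0 d
      have e : 4 / T ^ 2 * enorm3 d = 4 * enorm3 d / T ^ 2 := by ring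
      linarith [e ▸ this]
    have he : (12:ℝ) * T ^ (-2:ℤ) * enorm3 d = 12 * enorm3 d / T ^ 2 := by
      have he2 : T ^ (-2 : ℤ) = 1 / T ^ 2 := by
        rw [show (-2 : ℤ) = 1 - ((2:ℕ) + 1) by norm_num]
        norm_num
      rw [he2]
      ring
    rw [he]
    calc enorm3 v ≤ |v 0| + |v 1| + |v 2| := enorm3_le_sum v
      _ ≤ enorm3 d / T ^ 2 + 4 * enorm3 d / T ^ 2 + 4 * enorm3 d / T ^ 2 := by linarith
      _ ≤ 12 * enorm3 d / T ^ 2 := by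
          rw [← add_div, ← add_div, div_le_div_iff₀ hT2 hT2]
          nlinarith
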